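/- Uniqueness of the energy-minimizing control in a linear background flow: let A be a real d×d matrix, C := ∫₀¹ exp(−sA) exp(−sAᵀ) ds, ξ, y ∈ ℝ^d, and m := exp(−A) y − ξ. If a continuous control q : [0,1] → ℝ^d steers ξ to y (i.e. the solution of Ẋ = q + AX with X(0)=ξ satisfies X(1)=y) and achieves equality (1/2)∫₀¹‖q(t)‖² dt = (1/2)⟨C⁻¹ m, m⟩, then q(t) = exp(−tAᵀ) C⁻¹ m for every t ∈ [0,1]. Hence the minimization problem admits a unique global minimizer among continuous controls. -/

import Mathlib

set_option maxHeartbeats 4000000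
set_option synthInstance.maxHeartbeats 1000000

open Matrix
open scoped RealInnerProductSpace

section MCUAux

open NormedSpace MeasureTheory intervalIntegral Set

variable {d : ℕ}

lemma mcu_clm_cont :
    Continuous (fun M : Matrix (Fin d) (Fin d) ℝ => Matrix.toEuclideanCLM (𝕜 := ℝ) M) :=
  LinearMap.continuous_of_finiteDimensional
    ({ toFun := fun M => Matrix.toEuclideanCLM (𝕜 := ℝ) M,
       map_add' := fun a b => map_add _ a b,
       map_smul' := fun c a => map_smul _ c a } : Matrix (Fin d) (Fin d) ℝ →ₗ[ℝ] _)

lemma mcu_exp_comm (M : Matrix (Fin d) (Fin d) ℝ) :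
    Matrix.toEuclideanCLM (𝕜 := ℝ) (exp M) = exp (Matrix.toEuclideanCLM (𝕜 := ℝ) M) := by
  letI : SeminormedRing (Matrix (Fin d) (Fin d) ℝ) := Matrix.linftyOpSemiNormedRing
  letI : NormedRing (Matrix (Fin d) (Fin d) ℝ) := Matrix.linftyOpNormedRing
  letI : NormedAlgebra ℝ (Matrix (Fin d) (Fin d) ℝ) := Matrix.linftyOpNormedAlgebra
  letI : NormedAlgebra ℚ (Matrix (Fin d) (Fin d) ℝ) := .restrictScalars ℚ ℝ _
  exact map_exp (Matrix.toEuclideanCLM (𝕜 := ℝ)) mcu_clm_cont M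

lemma mcu_clm_eq_lin (M : Matrix (Fin d) (Fin d) ℝ) (x : EuclideanSpace ℝ (Fin d)) :
    Matrix.toEuclideanCLM (𝕜 := ℝ) M x = Matrix.toEuclideanLin M x := by
  rw [← Matrix.coe_toEuclideanCLM_eq_toEuclideanLin]; rfl

lemma mcu_inner_lin (M : Matrix (Fin d) (Fin d) ℝ) (x z : EuclideanSpace ℝ (Fin d)) :
    ⟪Matrix.toEuclideanLin M x, z⟫ = ⟪x, Matrix.toEuclideanLin Mᵀ z⟫ := by
  simp only [PiLp.inner_apply, RCLike.inner_apply, starRingEnd_apply, star_trivial]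
  show ∑ i, z i * (M *ᵥ (fun j => x j)) i = ∑ i, (Mᵀ *ᵥ (fun j => z j)) i * x i
  simp only [Matrix.mulVec, dotProduct, Finset.sum_mul, Finset.mul_sum,
    Matrix.transpose_apply]
  rw [Finset.sum_comm]
  congr 1; ext i; congr 1; ext j; ring

lemma mcu_inner_lin_dot (M : Matrix (Fin d) (Fin d) ℝ) (x z : EuclideanSpace ℝ (Fin d)) :
    ⟪x, Matrix.toEuclideanLin M z⟫
      = dotProduct (fun i => x i) (M *ᵥ (fun j => z j)) := by
  simp only [PiLp.inner_apply, RCLike.inner_apply, starRingEnd_apply, star_trivial]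
  exact Finset.sum_congr rfl fun i _ => mul_comm _ _

lemma mcu_lin_mul (M N : Matrix (Fin d) (Fin d) ℝ) (x : EuclideanSpace ℝ (Fin d)) :
    Matrix.toEuclideanLin (M * N) x = Matrix.toEuclideanLin M (Matrix.toEuclideanLin N x) := by
  simp [Matrix.toEuclideanLin_apply, Matrix.mulVec_mulVec]

lemma mcu_integral_dot (F : ℝ → Matrix (Fin d) (Fin d) ℝ) (x y : Fin d → ℝ)
    (hF : ∀ i j, IntervalIntegrable (fun s => F s i j) volume 0 1) :
    ∫ s in (0:ℝ)..1, ∑ i, x i * ∑ j, F s i j * y j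
      = ∑ i, x i * ∑ j, (∫ s in (0:ℝ)..1, F s i j) * y j := by
  have h1 : ∀ i j, IntervalIntegrable (fun s => F s i j * y j) volume 0 1 :=
    fun i j => (hF i j).mul_const (y j)
  have h2 : ∀ i, IntervalIntegrable (fun s => ∑ j, F s i j * y j) volume 0 1 := by
    intro i
    have h := IntervalIntegrable.sum (μ := volume) (a := (0:ℝ)) (b := 1) Finset.univ
      (f := fun j s => F s i j * y j) (fun j _ => h1 i j)
    have he : (fun s => ∑ j : Fin d, F s i j * y j) = ∑ j : Fin d, fun s => F s i j * y j := by
      ext s; simp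
    rw [he]; exact h
  have h3 : ∀ i, IntervalIntegrable (fun s => x i * ∑ j, F s i j * y j) volume 0 1 :=
    fun i => (h2 i).const_mul (x i)
  have e1 := intervalIntegral.integral_finset_sum (μ := volume) (a := (0:ℝ)) (b := 1)
    (s := Finset.univ) (f := fun i s => x i * ∑ j, F s i j * y j) (fun i _ => h3 i)
  rw [e1]
  refine Finset.sum_congr rfl fun i _ => ?_
  rw [intervalIntegral.integral_const_mul]
  congr 1
  have e2 := intervalIntegral.integral_finset_sum (μ := volume) (a := (0:ℝ)) (b := 1)
    (s := Finset.univ) (f := fun j s => F s i j * y j) (fun j _ => h1 i j)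
  rw [e2]
  exact Finset.sum_congr rfl fun j _ => intervalIntegral.integral_mul_const _ _

lemma mcu_interval_integral_inner (f : ℝ → EuclideanSpace ℝ (Fin d))
    (c : EuclideanSpace ℝ (Fin d)) (hf : IntervalIntegrable f volume 0 1) :
    ∫ s in (0:ℝ)..1, ⟪c, f s⟫ = ⟪c, ∫ s in (0:ℝ)..1, f s⟫ := by
  rw [intervalIntegral.integral_of_le (by norm_num : (0:ℝ) ≤ 1),
      intervalIntegral.integral_of_le (by norm_num : (0:ℝ) ≤ 1)]
  exact integral_inner (hf.1) c

lemma mcu_zero_on (f : ℝ → ℝ) (hf : ContinuousOn f (Icc 0 1)) (h0 : ∀ t, 0 ≤ f t)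
    (hI : ∫ t in (0:ℝ)..1, f t = 0) (hInt : IntervalIntegrable f volume 0 1) :
    ∀ t ∈ Icc (0:ℝ) 1, f t = 0 := by
  have hae : f =ᵐ[volume.restrict (Set.Ioc (0:ℝ) 1)] 0 :=
    (intervalIntegral.integral_eq_zero_iff_of_le_of_nonneg_ae (by norm_num)
      (Filter.Eventually.of_forall (fun t => h0 t)) hInt).mp hI
  have hae' : f =ᵐ[volume.restrict (Set.Icc (0:ℝ) 1)] 0 := by
    rwa [MeasureTheory.Measure.restrict_congr_set MeasureTheory.Ioc_ae_eq_Icc] at hae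
  exact fun t ht => MeasureTheory.Measure.eqOn_Icc_of_ae_eq volume (by norm_num) hae' hf
    continuousOn_const ht

end MCUAux

section MCUMain

open NormedSpace MeasureTheory intervalIntegral Set

/-- **Uniqueness of the energy-minimizing control in a linear background flow.** Let `A` be a
real `d×d` matrix, `C := ∫₀¹ exp(−sA) exp(−sAᵀ) ds` (entrywise), `ξ, y ∈ ℝ^d`, and
`m := exp(−A) y − ξ`. If a continuous control `q` steers `ξ` to `y` (i.e. the solution of
`Ẋ = q + AX`, `X(0) = ξ` satisfies `X(1) = y`) and achieves
`(1/2)∫₀¹‖q(t)‖² dt = (1/2)⟨C⁻¹ m, m⟩`, then `q(t) = exp(−tAᵀ) C⁻¹ m` on `[0,1]`. -/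
theorem minimizing_control_unique_linear_flow (d : ℕ)
    (A : Matrix (Fin d) (Fin d) ℝ)
    (C : Matrix (Fin d) (Fin d) ℝ)
    (hC : ∀ i j, C i j = ∫ s in (0 : ℝ)..1,
      (NormedSpace.exp (-s • A) * NormedSpace.exp (-s • Aᵀ)) i j)
    (ξ y m : EuclideanSpace ℝ (Fin d))
    (hm : m = Matrix.toEuclideanLin (NormedSpace.exp (-A)) y - ξ)
    (q : ℝ → EuclideanSpace ℝ (Fin d)) (hq : ContinuousOn q (Set.Icc (0 : ℝ) 1))
    (X : ℝ → EuclideanSpace ℝ (Fin d))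
    (hX : ∀ t ∈ Set.Icc (0 : ℝ) 1,
      HasDerivAt X (q t + Matrix.toEuclideanLin A (X t)) t)
    (hX0 : X 0 = ξ) (hX1 : X 1 = y)
    (henergy : (1 / 2) * (∫ t in (0 : ℝ)..1, ‖q t‖ ^ 2)
      = (1 / 2) * ⟪Matrix.toEuclideanLin C⁻¹ m, m⟫) :
    ∀ t ∈ Set.Icc (0 : ℝ) 1,
      q t = Matrix.toEuclideanLin (NormedSpace.exp (-t • Aᵀ))
        (Matrix.toEuclideanLin C⁻¹ m) := by
  classical
  set v : EuclideanSpace ℝ (Fin d) := Matrix.toEuclideanLin C⁻¹ m with hv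
  set B : EuclideanSpace ℝ (Fin d) →L[ℝ] EuclideanSpace ℝ (Fin d) :=
    Matrix.toEuclideanCLM (𝕜 := ℝ) A with hB
  set BT : EuclideanSpace ℝ (Fin d) →L[ℝ] EuclideanSpace ℝ (Fin d) :=
    Matrix.toEuclideanCLM (𝕜 := ℝ) Aᵀ with hBT
  set e : ℝ → (EuclideanSpace ℝ (Fin d) →L[ℝ] EuclideanSpace ℝ (Fin d)) :=
    fun s => exp (s • (-B)) with he
  set eT : ℝ → (EuclideanSpace ℝ (Fin d) →L[ℝ] EuclideanSpace ℝ (Fin d)) :=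
    fun s => exp (s • (-BT)) with heT
  have hEe : ∀ s : ℝ, e s = Matrix.toEuclideanCLM (𝕜 := ℝ) (exp (-s • A)) := by
    intro s
    have harg : s • (-B) = Matrix.toEuclideanCLM (𝕜 := ℝ) (-s • A) := by
      rw [hB, _root_.map_smul, smul_neg, ← neg_smul]
    show exp (s • (-B)) = Matrix.toEuclideanCLM (𝕜 := ℝ) (exp (-s • A))
    rw [harg, mcu_exp_comm]
  have hETe : ∀ s : ℝ, eT s = Matrix.toEuclideanCLM (𝕜 := ℝ) (exp (-s • Aᵀ)) := by
    intro s
    have harg : s • (-BT) = Matrix.toEuclideanCLM (𝕜 := ℝ) (-s • Aᵀ) := by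
      rw [hBT, _root_.map_smul, smul_neg, ← neg_smul]
    show exp (s • (-BT)) = Matrix.toEuclideanCLM (𝕜 := ℝ) (exp (-s • Aᵀ))
    rw [harg, mcu_exp_comm]
  have hTrans : ∀ s : ℝ, exp (-s • Aᵀ) = (exp (-s • A))ᵀ := by
    intro s
    rw [← Matrix.transpose_smul, Matrix.exp_transpose]
  -- continuity
  letI : NormedAlgebra ℚ (EuclideanSpace ℝ (Fin d) →L[ℝ] EuclideanSpace ℝ (Fin d)) :=
    .restrictScalars ℚ ℝ _
  have hec : Continuous e := exp_continuous.comp (continuous_id.smul continuous_const)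
  have heTc : Continuous eT := exp_continuous.comp (continuous_id.smul continuous_const)
  set p : ℝ → EuclideanSpace ℝ (Fin d) := fun s => eT s v with hpdef
  have hp : ∀ s : ℝ, p s = Matrix.toEuclideanLin (exp (-s • Aᵀ)) v := by
    intro s; rw [hpdef]; simp only [hETe s, mcu_clm_eq_lin]
  have hpc : Continuous p := heTc.clm_apply continuous_const
  -- entry continuity
  have hEntry : ∀ i j : Fin d, Continuous fun s : ℝ => (exp (-s • A)) i j := by
    intro i j
    have h1 : Continuous fun s : ℝ => e s (EuclideanSpace.single j (1:ℝ)) :=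
      hec.clm_apply continuous_const
    have h2 : Continuous fun s : ℝ => (e s (EuclideanSpace.single j (1:ℝ))) i :=
      (EuclideanSpace.proj i).continuous.comp h1
    convert h2 using 1
    funext s
    rw [hEe s, mcu_clm_eq_lin]
    show (exp (-s • A)) i j
      = ((exp (-s • A)) *ᵥ (fun k => EuclideanSpace.single j (1:ℝ) k)) i
    simp [Matrix.mulVec, dotProduct, EuclideanSpace.single_apply]
  have hEntryT : ∀ i j : Fin d, Continuous fun s : ℝ => (exp (-s • Aᵀ)) i j := by
    intro i j
    have h : Continuous fun s : ℝ => (exp (-s • A)) j i := hEntry j i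
    convert h using 1
    funext s
    rw [hTrans s]
    rfl
  set G : ℝ → Matrix (Fin d) (Fin d) ℝ :=
    fun s => exp (-s • A) * exp (-s • Aᵀ) with hG
  have hGc : ∀ i j : Fin d, Continuous fun s => G s i j := by
    intro i j
    have : (fun s => G s i j) = fun s => ∑ k, (exp (-s • A)) i k * (exp (-s • Aᵀ)) k j := by
      funext s; rw [hG]; simp [Matrix.mul_apply]
    rw [this]
    exact continuous_finset_sum _ fun k _ => (hEntry i k).mul (hEntryT k j)
  have hGint : ∀ i j : Fin d, IntervalIntegrable (fun s => G s i j) volume 0 1 :=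
    fun i j => (hGc i j).intervalIntegrable 0 1
  -- the ODE integral identity
  have hu : ∀ t ∈ Set.Icc (0:ℝ) 1,
      HasDerivAt (fun t => e t (X t)) (e t (q t)) t := by
    intro t ht
    have hder : HasDerivAt e (e t * (-B)) t := by
      rw [he]; exact hasDerivAt_exp_smul_const (-B) t
    have h := hder.clm_apply (hX t ht)
    refine h.congr_deriv ?_
    symm
    rw [ContinuousLinearMap.mul_apply, map_add]
    have hBX : B (X t) = Matrix.toEuclideanLin A (X t) := by rw [hB]; exact mcu_clm_eq_lin _ _
    rw [ContinuousLinearMap.neg_apply, hBX, map_neg]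
    abel
  have hInt1 : IntervalIntegrable (fun s => e s (q s)) volume 0 1 := by
    apply ContinuousOn.intervalIntegrable
    rw [Set.uIcc_of_le (by norm_num : (0:ℝ) ≤ 1)]
    exact hec.continuousOn.clm_apply hq
  have hkey : (∫ s in (0:ℝ)..1, e s (q s)) = m := by
    rw [intervalIntegral.integral_eq_sub_of_hasDerivAt
      (f := fun t => e t (X t)) (f' := fun t => e t (q t))
      (fun t ht => hu t (by rwa [Set.uIcc_of_le (by norm_num : (0:ℝ) ≤ 1)] at ht)) hInt1]
    have h0 : e 0 = 1 := by
      show exp ((0:ℝ) • (-B)) = 1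
      have : ((0:ℝ) • (-B)) = 0 := zero_smul ℝ (-B)
      rw [this, exp_zero]
    have h1 : e 1 (X 1) = Matrix.toEuclideanLin (exp (-A)) y := by
      rw [hX1, hEe 1, mcu_clm_eq_lin]
      norm_num
    rw [h1, h0, hX0, hm]
    rfl
  -- energy identity
  have hq2 : (∫ t in (0:ℝ)..1, ‖q t‖ ^ 2) = ⟪v, m⟫ := by
    linarith
  -- ⟪q s, p s⟫ pointwise
  have hqp_point : ∀ s : ℝ, ⟪q s, p s⟫ = ⟪v, e s (q s)⟫ := by
    intro s
    rw [hp s, hTrans s, ← mcu_inner_lin, real_inner_comm]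
    congr 1
    rw [hEe s, mcu_clm_eq_lin]
  have h_qp : (∫ s in (0:ℝ)..1, ⟪q s, p s⟫) = ⟪v, m⟫ := by
    have : (fun s => ⟪q s, p s⟫) = fun s => ⟪v, e s (q s)⟫ := funext hqp_point
    rw [this, mcu_interval_integral_inner _ _ hInt1, hkey]
  -- ⟪p s, p s⟫ pointwise and integral
  have hpp_point : ∀ s : ℝ, ⟪p s, p s⟫ = ∑ i, v i * ∑ j, G s i j * v j := by
    intro s
    have e1 : Matrix.toEuclideanLin (G s) v
        = Matrix.toEuclideanLin (exp (-s • A)) (p s) := by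
      rw [hp s]
      exact mcu_lin_mul _ _ _
    have h1 : ⟪v, Matrix.toEuclideanLin (G s) v⟫ = ⟪p s, p s⟫ := by
      rw [e1]
      have e2 := mcu_inner_lin ((exp (-s • A))ᵀ) v (p s)
      rw [Matrix.transpose_transpose] at e2
      rw [← e2, ← hTrans s, ← hp s]
    rw [← h1, mcu_inner_lin_dot]
    rfl
  have h_pp : (∫ s in (0:ℝ)..1, ⟪p s, p s⟫) = ⟪v, m⟫ := by
    have h1 : (fun s => ⟪p s, p s⟫) = fun s => ∑ i, v i * ∑ j, G s i j * v j :=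
      funext hpp_point
    rw [h1, mcu_integral_dot G _ _ hGint]
    have h2 : ∀ i j : Fin d, (∫ s in (0:ℝ)..1, G s i j) = C i j := by
      intro i j; rw [hC i j]
    have h3 : ∑ i, v i * ∑ j, (∫ s in (0:ℝ)..1, G s i j) * v j
        = ∑ i, v i * ∑ j, C i j * v j := by
      refine Finset.sum_congr rfl fun i _ => ?_
      congr 1
      exact Finset.sum_congr rfl fun j _ => by rw [h2 i j]
    rw [h3]
    have h4 : ⟪v, Matrix.toEuclideanLin C v⟫ = ∑ i, v i * ∑ j, C i j * v j := by
      rw [mcu_inner_lin_dot]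
      rfl
    rw [← h4]
    -- C is invertible since positive definite
    have hCpd : C.PosDef := by
      refine Matrix.PosDef.of_dotProduct_mulVec_pos ?_ ?_
      · show Cᴴ = C
        ext i j
        rw [Matrix.conjTranspose_apply, star_trivial, hC i j, hC j i]
        congr 1
        funext s
        rw [hTrans s]
        show ((exp (-s • A)) * (exp (-s • A))ᵀ) j i
          = ((exp (-s • A)) * (exp (-s • A))ᵀ) i j
        simp [Matrix.mul_apply, Matrix.transpose_apply, mul_comm]
      · intro x hx
        have hstar : star x = x := by
          funext i; simp
        rw [hstar]
        show (0:ℝ) < dotProduct x (C *ᵥ x)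
        have hxC : dotProduct x (C *ᵥ x) = ∑ i, x i * ∑ j, C i j * x j := rfl
        have hint : dotProduct x (C *ᵥ x)
            = ∫ s in (0:ℝ)..1, ∑ i, x i * ∑ j, G s i j * x j := by
          rw [hxC, mcu_integral_dot G _ _ hGint]
          refine Finset.sum_congr rfl fun i _ => ?_
          congr 1
          exact Finset.sum_congr rfl fun j _ => by rw [hC i j]
        rw [hint]
        have hw : ∀ s : ℝ, (exp (-s • Aᵀ)) *ᵥ x ≠ 0 := by
          intro s h0
          apply hx
          have hone : exp (s • Aᵀ) * exp (-s • Aᵀ) = 1 := by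
            rw [neg_smul, ← Matrix.exp_add_of_commute (s • Aᵀ) (-(s • Aᵀ)) ((Commute.refl _).neg_right)]
            simp [exp_zero]
          have : (exp (s • Aᵀ) * exp (-s • Aᵀ)) *ᵥ x = 0 := by
            rw [← Matrix.mulVec_mulVec, h0, Matrix.mulVec_zero]
          rwa [hone, Matrix.one_mulVec] at this
        have hptw : ∀ s : ℝ, ∑ i, x i * ∑ j, G s i j * x j
            = dotProduct ((exp (-s • Aᵀ)) *ᵥ x) ((exp (-s • Aᵀ)) *ᵥ x) := by
          intro s
          have h5 : ∑ i, x i * ∑ j, G s i j * x j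
              = dotProduct x ((exp (-s • A) * exp (-s • Aᵀ)) *ᵥ x) := rfl
          rw [h5]
          rw [← Matrix.mulVec_mulVec, dotProduct_mulVec, hTrans s,
            ← Matrix.mulVec_transpose]
        have hcont : Continuous fun s => ∑ i, x i * ∑ j, G s i j * x j := by
          apply continuous_finset_sum
          intro i _
          exact continuous_const.mul
            (continuous_finset_sum _ fun j _ => (hGc i j).mul continuous_const)
        apply intervalIntegral_pos_of_pos_on (hcont.intervalIntegrable 0 1)
        · intro s _
          rw [hptw s]
          have hwz := hw s
          have hnn : (0:ℝ) ≤ dotProduct ((exp (-s • Aᵀ)) *ᵥ x) ((exp (-s • Aᵀ)) *ᵥ x) :=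
            Finset.sum_nonneg fun k _ => mul_self_nonneg _
          rcases lt_or_eq_of_le hnn with h | h
          · exact h
          · exact absurd (dotProduct_self_eq_zero.mp h.symm) hwz
        · norm_num
      -- end posdef
    have hdet : IsUnit C.det := isUnit_iff_ne_zero.mpr (ne_of_gt hCpd.det_pos)
    have hCC : C * C⁻¹ = 1 := Matrix.mul_nonsing_inv C hdet
    have : Matrix.toEuclideanLin C v = m := by
      rw [hv, ← mcu_lin_mul, hCC]
      show (Matrix.toEuclideanLin (1 : Matrix (Fin d) (Fin d) ℝ)) m = m
      rw [Matrix.toEuclideanLin_apply]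
      simp [Matrix.one_mulVec]
    rw [this]
  -- assemble: the L² distance is zero
  have hIq2 : IntervalIntegrable (fun s => ‖q s‖ ^ 2) volume 0 1 := by
    apply ContinuousOn.intervalIntegrable
    rw [Set.uIcc_of_le (by norm_num : (0:ℝ) ≤ 1)]
    exact hq.norm.pow 2
  have hIqp : IntervalIntegrable (fun s => ⟪q s, p s⟫) volume 0 1 := by
    apply ContinuousOn.intervalIntegrable
    rw [Set.uIcc_of_le (by norm_num : (0:ℝ) ≤ 1)]
    exact hq.inner hpc.continuousOn
  have hIpp : IntervalIntegrable (fun s => ⟪p s, p s⟫) volume 0 1 :=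
    (hpc.inner hpc).intervalIntegrable 0 1
  have hsplit : (fun s => ‖q s - p s‖ ^ 2)
      = fun s => ‖q s‖ ^ 2 - 2 * ⟪q s, p s⟫ + ⟪p s, p s⟫ := by
    funext s
    rw [real_inner_self_eq_norm_sq]
    exact norm_sub_sq_real _ _
  have hzero : (∫ s in (0:ℝ)..1, ‖q s - p s‖ ^ 2) = 0 := by
    rw [hsplit, intervalIntegral.integral_add (hIq2.sub (hIqp.const_mul 2)) hIpp,
      intervalIntegral.integral_sub hIq2 (hIqp.const_mul 2),
      intervalIntegral.integral_const_mul]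
    rw [hq2, h_qp, h_pp]
    ring
  have hfin := mcu_zero_on (fun s => ‖q s - p s‖ ^ 2)
    (((hq.sub hpc.continuousOn).norm).pow 2)
    (fun t => pow_nonneg (norm_nonneg _) 2) hzero
    (by
      apply ContinuousOn.intervalIntegrable
      rw [Set.uIcc_of_le (by norm_num : (0:ℝ) ≤ 1)]
      exact ((hq.sub hpc.continuousOn).norm).pow 2)
  intro t ht
  have h := hfin t ht
  have hnorm : ‖q t - p t‖ = 0 := by
    have := pow_eq_zero_iff (n := 2) (by norm_num) |>.mp h
    exact this
  have : q t - p t = 0 := norm_eq_zero.mp hnorm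
  have hqt : q t = p t := sub_eq_zero.mp this
  rw [hqt, hp t]

end MCUMain
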